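/- arXiv:2203.17144 — 2 statements merged into one kernel-verified Lean document; each statement's English description precedes it below -/
import Mathlib

section
/- Let p : ℕ → (0,1] be a sequence with log(1/p_j) = o(j) as j → ∞. For τ ≥ 2/p_0, define M(τ) = max{ j ≥ 0 : Σ_{k=0}^j (1/p_k) ≤ τ/2 }. Then M(τ) = ω(log τ) as τ → ∞, i.e., for every C > 1 there exists τ_0 such that for all τ ≥ τ_0, M(τ) ≥ C log τ. -/
open Filter Real Asymptotics

theorem stmt1 (p : ℕ → ℝ) (hp : ∀ j, 0 < p j ∧ p j ≤ 1)
    (hlittle : ∀ c : ℝ, 0 < c → ∃ J : ℕ, ∀ j ≥ J, Real.log (1 / p j) ≤ c * j) :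
    ∀ C : ℝ, 1 < C → ∃ τ₀ : ℝ, ∀ τ : ℝ, τ₀ ≤ τ → 2 / p 0 ≤ τ →
      ∃ M : ℕ, (∑ k ∈ Finset.range (M + 1), 1 / p k ≤ τ / 2) ∧
        C * Real.log τ ≤ (M : ℝ) := by
  intro C hC
  have hC0 : (0:ℝ) < C := lt_trans one_pos hC
  set c : ℝ := 1 / (4 * C) with hc
  have hcpos : 0 < c := by positivity
  obtain ⟨J, hJ⟩ := hlittle c hcpos
  set A : ℝ := ∑ k ∈ Finset.range J, 1 / p k with hA
  -- first eventual bound : C * log τ + 2 ≤ τ ^ (1/4)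
  have hlo : (fun τ : ℝ => C * Real.log τ + 2) =o[atTop] fun τ : ℝ => τ ^ (1/4 : ℝ) := by
    refine IsLittleO.add ((isLittleO_log_rpow_atTop (by norm_num : (0:ℝ) < 1/4)).const_mul_left C) ?_
    refine Asymptotics.isLittleO_const_left.2 (Or.inr ?_)
    exact tendsto_norm_atTop_atTop.comp (tendsto_rpow_atTop (by norm_num : (0:ℝ) < 1/4))
  have h1 : ∀ᶠ τ : ℝ in atTop, C * Real.log τ + 2 ≤ τ ^ (1/4 : ℝ) := by
    filter_upwards [hlo.def one_pos, eventually_ge_atTop (0:ℝ)] with τ hb hτ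
    have : C * Real.log τ + 2 ≤ ‖C * Real.log τ + 2‖ := le_abs_self _
    calc C * Real.log τ + 2 ≤ ‖C * Real.log τ + 2‖ := le_abs_self _
      _ ≤ 1 * ‖τ ^ (1/4 : ℝ)‖ := hb
      _ = τ ^ (1/4 : ℝ) := by
          rw [one_mul, Real.norm_eq_abs, abs_of_nonneg (Real.rpow_nonneg hτ _)]
  -- second eventual bound : A + exp c * τ ^ (1/2) ≤ τ / 2
  have t1 : Tendsto (fun τ : ℝ => A / τ) atTop (nhds 0) :=
    tendsto_const_nhds.div_atTop tendsto_id
  have t2 : Tendsto (fun τ : ℝ => Real.exp c * τ ^ (-(1/2) : ℝ)) atTop (nhds 0) := by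
    simpa using (tendsto_rpow_neg_atTop (by norm_num : (0:ℝ) < 1/2)).const_mul (Real.exp c)
  have t3 : Tendsto (fun τ : ℝ => (A + Real.exp c * τ ^ (1/2 : ℝ)) / τ) atTop (nhds 0) := by
    have := t1.add t2
    rw [add_zero] at this
    refine this.congr' ?_
    filter_upwards [eventually_gt_atTop (0:ℝ)] with τ hτ
    have hτ0 : τ ≠ 0 := ne_of_gt hτ
    have : τ ^ (-(1/2) : ℝ) = τ ^ (1/2 : ℝ) / τ := by
      rw [eq_comm]
      nth_rewrite 2 [← Real.rpow_one τ]
      rw [← Real.rpow_sub hτ]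
      norm_num
    rw [this]
    field_simp
  have h2 : ∀ᶠ τ : ℝ in atTop, A + Real.exp c * τ ^ (1/2 : ℝ) ≤ τ / 2 := by
    filter_upwards [t3.eventually (gt_mem_nhds (by norm_num : (0:ℝ) < 1/2)),
      eventually_gt_atTop (0:ℝ)] with τ hlt hτ
    have := (div_le_iff₀ hτ).1 (le_of_lt hlt)
    linarith
  -- assemble
  obtain ⟨τ₀, hτ₀⟩ := eventually_atTop.1 (h1.and (h2.and (eventually_ge_atTop (1:ℝ))))
  refine ⟨τ₀, fun τ hτ _ => ?_⟩
  obtain ⟨hτ1, hτ2, hτ3⟩ := hτ₀ τ hτ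
  have hτpos : (0:ℝ) < τ := lt_of_lt_of_le one_pos hτ3
  have hlogτ : 0 ≤ Real.log τ := Real.log_nonneg hτ3
  set M : ℕ := ⌈C * Real.log τ⌉₊ with hM
  refine ⟨M, ?_, Nat.le_ceil _⟩
  have hM1 : (M : ℝ) + 1 ≤ C * Real.log τ + 2 := by
    have := Nat.ceil_lt_add_one (by positivity : 0 ≤ C * Real.log τ)
    rw [← hM] at this
    linarith
  -- bound each term with index ≥ J
  have hterm : ∀ k, J ≤ k → k ≤ M → 1 / p k ≤ Real.exp c * τ ^ (1/4 : ℝ) := by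
    intro k hk hkM
    have hpk : 0 < 1 / p k := by
      have := (hp k).1; positivity
    have h1k : 1 / p k ≤ Real.exp (c * k) := by
      rw [← Real.exp_log hpk]
      exact Real.exp_le_exp.2 (hJ k hk)
    have h2k : c * (k:ℝ) ≤ c * M := by
      have : (k:ℝ) ≤ M := by exact_mod_cast hkM
      nlinarith
    have h3k : c * (M:ℝ) ≤ (1/4) * Real.log τ + c := by
      have : (M:ℝ) ≤ C * Real.log τ + 1 := by linarith
      have hcC : c * C = 1/4 := by
        rw [hc]; field_simp
      nlinarith
    calc 1 / p k ≤ Real.exp (c * k) := h1k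
      _ ≤ Real.exp ((1/4) * Real.log τ + c) := Real.exp_le_exp.2 (le_trans h2k h3k)
      _ = Real.exp c * τ ^ (1/4 : ℝ) := by
          rw [Real.exp_add, Real.rpow_def_of_pos hτpos, mul_comm (Real.log τ)]
          ring
  -- split the sum
  set N : ℕ := max J (M + 1) with hN
  have hnonneg : ∀ k ∈ Finset.range N, 0 ≤ 1 / p k := by
    intro k _; have := (hp k).1; positivity
  have hsub : Finset.range (M + 1) ⊆ Finset.range N :=
    Finset.range_subset_range.2 (le_max_right _ _)
  have hsplit : ∑ k ∈ Finset.range J, 1 / p k + ∑ k ∈ Finset.Ico J N, 1 / p k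
      = ∑ k ∈ Finset.range N, 1 / p k :=
    Finset.sum_range_add_sum_Ico _ (le_max_left _ _)
  have hIco : ∑ k ∈ Finset.Ico J N, 1 / p k
      ≤ ((M:ℝ) + 1) * (Real.exp c * τ ^ (1/4 : ℝ)) := by
    have hcard : ((Finset.Ico J N).card : ℝ) ≤ (M:ℝ) + 1 := by
      rw [Nat.card_Ico]
      have : N - J ≤ M + 1 := by omega
      exact_mod_cast this
    calc ∑ k ∈ Finset.Ico J N, 1 / p k
        ≤ ∑ _k ∈ Finset.Ico J N, Real.exp c * τ ^ (1/4 : ℝ) := by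
          refine Finset.sum_le_sum fun k hk => ?_
          rw [Finset.mem_Ico] at hk
          exact hterm k hk.1 (by omega)
      _ = ((Finset.Ico J N).card : ℝ) * (Real.exp c * τ ^ (1/4 : ℝ)) := by
          rw [Finset.sum_const, nsmul_eq_mul]
      _ ≤ ((M:ℝ) + 1) * (Real.exp c * τ ^ (1/4 : ℝ)) := by
          have hnn : 0 ≤ Real.exp c * τ ^ (1/4 : ℝ) := by positivity
          nlinarith
  have hpow : τ ^ (1/4 : ℝ) * τ ^ (1/4 : ℝ) = τ ^ (1/2 : ℝ) := by
    rw [← Real.rpow_add hτpos]; norm_num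
  have hrnn : 0 ≤ Real.exp c * τ ^ (1/4 : ℝ) := by positivity
  calc ∑ k ∈ Finset.range (M + 1), 1 / p k
      ≤ ∑ k ∈ Finset.range N, 1 / p k := Finset.sum_le_sum_of_subset_of_nonneg hsub
        (fun k hk _ => hnonneg k hk)
    _ = A + ∑ k ∈ Finset.Ico J N, 1 / p k := by rw [← hsplit]
    _ ≤ A + ((M:ℝ) + 1) * (Real.exp c * τ ^ (1/4 : ℝ)) := by linarith
    _ ≤ A + τ ^ (1/4 : ℝ) * (Real.exp c * τ ^ (1/4 : ℝ)) := by
        have : (M:ℝ) + 1 ≤ τ ^ (1/4 : ℝ) := le_trans hM1 hτ1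
        nlinarith
    _ = A + Real.exp c * τ ^ (1/2 : ℝ) := by rw [← hpow]; ring
    _ ≤ τ / 2 := hτ2
end

section
/- Let λ ∈ (0,1), let p : ℕ → (0,1] be a send sequence, and suppose there are infinitely many j with p_j ≤ (λ p_0 / 2)^j. Let r = 1 - e^{-λ p_0}. Then the series Σ_{j≥1} r^{j-1} (1-r) (Σ_{k=1}^j 1/p_k) diverges. -/
theorem stmt4 (l : ℝ) (hl : 0 < l ∧ l < 1)
    (p : ℕ → ℝ) (hp : ∀ j, 0 < p j ∧ p j ≤ 1)
    (hinf : ∀ N : ℕ, ∃ j ≥ N, p j ≤ (l * p 0 / 2) ^ j)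
    (r : ℝ) (hr : r = 1 - Real.exp (-(l * p 0))) :
    ¬ Summable (fun j : ℕ =>
        r ^ j * (1 - r) * ∑ k ∈ Finset.Icc 1 (j + 1), 1 / p k) := by
  obtain ⟨hl0, hl1⟩ := hl
  set x := l * p 0 with hx
  have hp0 := (hp 0).1
  have hx0 : 0 < x := mul_pos hl0 hp0
  have hx1 : x < 1 := lt_of_le_of_lt (by nlinarith [(hp 0).2]) hl1
  set c := x / 2 with hc
  have hc0 : 0 < c := by positivity
  have hrc : c ≤ r := by
    have h1 : 1 + x ≤ Real.exp x := by linarith [Real.add_one_le_exp x]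
    have hex : (0:ℝ) < 1 + x := by linarith
    have h3 : Real.exp (-x) ≤ (1 + x)⁻¹ := by
      rw [Real.exp_neg x]
      exact inv_anti₀ hex h1
    have h4 : (1 + x)⁻¹ ≤ 1 - x / 2 := by
      rw [inv_le_iff_one_le_mul₀ hex]
      nlinarith
    rw [hr]
    nlinarith
  have hr1 : 1 - r = Real.exp (-x) := by rw [hr]; ring
  have hrpos : 0 < r := lt_of_lt_of_le hc0 hrc
  set ε := Real.exp (-x) / c with hε
  have hεpos : 0 < ε := by positivity
  intro hs
  have htend := hs.tendsto_atTop_zero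
  rw [Metric.tendsto_atTop] at htend
  obtain ⟨N, hN⟩ := htend ε hεpos
  obtain ⟨j, hjN, hjp⟩ := hinf (N + 1)
  have hj1 : 1 ≤ j := le_trans (Nat.le_add_left 1 N) hjN
  have hpj := (hp j).1
  have hcj : (0:ℝ) < c ^ j := pow_pos hc0 j
  -- 1/p j ≥ (c^j)⁻¹
  have hinv : (c ^ j)⁻¹ ≤ 1 / p j := by
    rw [one_div]
    exact inv_anti₀ hpj hjp
  have hsum : 1 / p j ≤ ∑ k ∈ Finset.Icc 1 j, 1 / p k := by
    apply Finset.single_le_sum (f := fun k => 1 / p k)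
    · intro i _
      have := (hp i).1
      positivity
    · exact Finset.mem_Icc.2 ⟨hj1, le_rfl⟩
  have hpow : c ^ (j - 1) ≤ r ^ (j - 1) := pow_le_pow_left₀ hc0.le hrc _
  have hkey : ε ≤ r ^ (j - 1) * (1 - r) * ∑ k ∈ Finset.Icc 1 ((j - 1) + 1), 1 / p k := by
    have hsub : j - 1 + 1 = j := Nat.succ_pred_eq_of_pos hj1
    rw [hsub]
    have h5 : c ^ (j - 1) * Real.exp (-x) * (c ^ j)⁻¹ ≤
        r ^ (j - 1) * (1 - r) * ∑ k ∈ Finset.Icc 1 j, 1 / p k := by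
      have hS : (c ^ j)⁻¹ ≤ ∑ k ∈ Finset.Icc 1 j, 1 / p k := le_trans hinv hsum
      rw [hr1]
      have he : (0:ℝ) < Real.exp (-x) := Real.exp_pos _
      apply mul_le_mul (mul_le_mul hpow le_rfl he.le (pow_nonneg hrpos.le _)) hS
        (by positivity) (by positivity)
    refine le_trans (le_of_eq ?_) h5
    rw [hε]
    have hj' : c ^ j = c ^ (j - 1) * c := by
      rw [← hsub]; exact pow_succ c (j - 1)
    rw [hj']
    field_simp
  have hlt := hN (j - 1) (by omega)
  rw [Real.dist_eq, sub_zero] at hlt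
  have habs : |r ^ (j - 1) * (1 - r) * ∑ k ∈ Finset.Icc 1 ((j - 1) + 1), 1 / p k| <
      ε := hlt
  exact absurd (lt_of_le_of_lt (le_trans hkey (le_abs_self _)) habs) (lt_irrefl ε)
end
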